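/- For every integer ℓ ≥ 1, the number of partitions of 6ℓ into at most 3 parts each of size at most 4ℓ exceeds the number of partitions of 6ℓ−1 into at most 3 parts each of size at most 4ℓ by exactly 1. -/

import Mathlib

/-- `boxPartitions k j n` : the number of partitions of `n` into at most `j` parts,
with each part at most `k`. -/
noncomputable def boxPartitions (k j n : ℕ) : ℕ :=
  Nat.card {π : n.Partition // Multiset.card π.parts ≤ j ∧ ∀ i ∈ π.parts, i ≤ k}

def tri (k n : ℕ) : Finset (ℕ × ℕ × ℕ) :=
  (Finset.range (k+1) ×ˢ Finset.range (k+1) ×ˢ Finset.range (k+1)).filter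
    (fun p => p.2.1 ≤ p.1 ∧ p.2.2 ≤ p.2.1 ∧ p.1 + p.2.1 + p.2.2 = n)

lemma mem_tri {k n : ℕ} {p : ℕ × ℕ × ℕ} :
    p ∈ tri k n ↔ p.1 ≤ k ∧ p.2.1 ≤ p.1 ∧ p.2.2 ≤ p.2.1 ∧ p.1 + p.2.1 + p.2.2 = n := by
  simp only [tri, Finset.mem_filter, Finset.mem_product, Finset.mem_range, Nat.lt_succ_iff]
  constructor
  · rintro ⟨⟨h1, h2, h3⟩, h4, h5, h6⟩; exact ⟨h1, h4, h5, h6⟩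
  · rintro ⟨h1, h2, h3, h4⟩; exact ⟨⟨h1, by omega, by omega⟩, h2, h3, h4⟩

lemma sum_filter_ne_zero (m : Multiset ℕ) : (m.filter (· ≠ 0)).sum = m.sum := by
  induction m using Multiset.induction with
  | empty => simp
  | cons a s ih =>
    by_cases h : a = 0 <;> simp [Multiset.filter_cons, h, ih]

def toPart {k n : ℕ} (p : {x // x ∈ tri k n}) :
    {π : n.Partition // Multiset.card π.parts ≤ 3 ∧ ∀ i ∈ π.parts, i ≤ k} := by
  refine ⟨⟨({p.1.1, p.1.2.1, p.1.2.2} : Multiset ℕ).filter (· ≠ 0), ?_, ?_⟩, ?_, ?_⟩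
  · intro i hi
    have := Multiset.of_mem_filter hi
    omega
  · rw [sum_filter_ne_zero]
    have := p.2
    rw [mem_tri] at this
    simp only [Multiset.insert_eq_cons, Multiset.sum_cons, Multiset.sum_singleton]
    omega
  · have : Multiset.card ((({p.1.1, p.1.2.1, p.1.2.2} : Multiset ℕ)).filter (· ≠ 0)) ≤ 3 :=
      le_trans (Multiset.card_le_card (Multiset.filter_le _ _)) (by simp)
    exact this
  · intro i hi
    have h1 : i ∈ ({p.1.1, p.1.2.1, p.1.2.2} : Multiset ℕ) := Multiset.mem_of_mem_filter hi
    have := p.2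
    rw [mem_tri] at this
    simp only [Multiset.insert_eq_cons, Multiset.mem_cons, Multiset.mem_singleton] at h1
    rcases h1 with rfl | rfl | rfl <;> omega

lemma toPart_bijective {k n : ℕ} : Function.Bijective (@toPart k n) := by
  constructor
  · rintro ⟨⟨a, b, c⟩, hp⟩ ⟨⟨a', b', c'⟩, hp'⟩ h
    have hm : (({a, b, c} : Multiset ℕ).filter (· ≠ 0)) = (({a', b', c'} : Multiset ℕ).filter (· ≠ 0)) := by
      have := congrArg (fun x => x.1.parts) h
      simpa [toPart] using this
    rw [mem_tri] at hp hp'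
    simp only at hp hp'
    -- number of zeros among a,b,c is 3 - card of filter; add zeros back
    have hfull : ({a, b, c} : Multiset ℕ) = ({a', b', c'} : Multiset ℕ) := by
      have key : ∀ x y z : ℕ, ({x, y, z} : Multiset ℕ)
          = Multiset.filter (fun t => t ≠ 0) {x, y, z}
            + Multiset.replicate
              (3 - Multiset.card (Multiset.filter (fun t => t ≠ 0) ({x, y, z} : Multiset ℕ))) 0 := by
        intro x y z
        conv_lhs => rw [← Multiset.filter_add_not (fun t => t ≠ 0) ({x, y, z} : Multiset ℕ)]
        congr 1
        rw [Multiset.eq_replicate]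
        have hc : Multiset.card (Multiset.filter (fun t => t ≠ 0) ({x, y, z} : Multiset ℕ))
            + Multiset.card (Multiset.filter (fun t => ¬ t ≠ 0) ({x, y, z} : Multiset ℕ)) = 3 := by
          rw [← Multiset.card_add, Multiset.filter_add_not]
          simp
        refine ⟨by omega, fun t ht => ?_⟩
        have := Multiset.of_mem_filter ht
        omega
      rw [key a b c, key a' b' c', hm]
    -- now sorted lists equal
    have hperm : List.Perm [a, b, c] [a', b', c'] := by
      rwa [show ({a,b,c} : Multiset ℕ) = ↑[a,b,c] from rfl,
        show ({a',b',c'} : Multiset ℕ) = ↑[a',b',c'] from rfl, Multiset.coe_eq_coe] at hfull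
    have hs1 : List.Pairwise (· ≥ ·) [a, b, c] := by
      simp [List.pairwise_cons]; omega
    have hs2 : List.Pairwise (· ≥ ·) [a', b', c'] := by
      simp [List.pairwise_cons]; omega
    have := List.Perm.eq_of_pairwise' hs1 hs2 hperm
    simp only [List.cons.injEq] at this
    simp only [Subtype.mk.injEq, Prod.mk.injEq]
    tauto
  · rintro ⟨π, hcard, hk⟩
    have hsorted := Multiset.pairwise_sort π.parts (· ≥ ·)
    have hperm := Multiset.sort_eq π.parts (· ≥ ·)
    have hlen : (Multiset.sort π.parts (· ≥ ·)).length ≤ 3 := by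
      rw [← Multiset.length_sort (· ≥ ·)] at hcard; exact hcard
    set l := Multiset.sort π.parts (· ≥ ·) with hl
    have hpos : ∀ i ∈ l, 0 < i := by
      intro i hi
      exact π.parts_pos (by rw [← hperm]; exact_mod_cast hi)
    have hk' : ∀ i ∈ l, i ≤ k := by
      intro i hi
      exact hk i (by rw [← hperm]; exact_mod_cast hi)
    have hsum : l.sum = n := by
      have := π.parts_sum
      rw [← hperm] at this
      simpa using this
    -- produce triple from l
    have key : ∃ a b c : ℕ, a ≤ k ∧ b ≤ a ∧ c ≤ b ∧ a + b + c = n ∧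
        (({a, b, c} : Multiset ℕ).filter (· ≠ 0)) = π.parts := by
      match l, hl with
      | [], hl =>
        refine ⟨0, 0, 0, by omega, le_refl _, le_refl _, by simpa using hsum, ?_⟩
        rw [← hperm]
        simp [Multiset.filter_cons, Multiset.filter_singleton]
      | [a], hl =>
        have ha := hpos a (by simp)
        refine ⟨a, 0, 0, hk' a (by simp), by omega, le_refl _, by simp at hsum; omega, ?_⟩
        rw [← hperm]
        simp [Multiset.filter_cons, Multiset.filter_singleton, ha.ne']
      | [a, b], hl =>
        have ha := hpos a (by simp)
        have hb := hpos b (by simp)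
        have hab : b ≤ a := by
          simp [List.pairwise_cons] at hsorted; omega
        refine ⟨a, b, 0, hk' a (by simp), hab, by omega, by simp at hsum; omega, ?_⟩
        rw [← hperm]
        simp [Multiset.filter_cons, Multiset.filter_singleton, ha.ne', hb.ne']
        rfl
      | [a, b, c], hl =>
        have ha := hpos a (by simp)
        have hb := hpos b (by simp)
        have hc := hpos c (by simp)
        have hso : b ≤ a ∧ c ≤ b := by
          simp [List.pairwise_cons] at hsorted; omega
        refine ⟨a, b, c, hk' a (by simp), hso.1, hso.2, by simp at hsum; omega, ?_⟩
        rw [← hperm]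
        simp [Multiset.filter_cons, Multiset.filter_singleton, ha.ne', hb.ne', hc.ne']
        rfl
      | a :: b :: c :: d :: l', hl =>
        exfalso; simp at hlen; omega
    obtain ⟨a, b, c, h1, h2, h3, h4, h5⟩ := key
    refine ⟨⟨(a, b, c), mem_tri.mpr ⟨h1, h2, h3, h4⟩⟩, ?_⟩
    simp only [toPart, Subtype.mk.injEq]
    exact Nat.Partition.ext h5

lemma boxPartitions_eq_card_tri (k n : ℕ) : boxPartitions k 3 n = (tri k n).card := by
  rw [boxPartitions, ← Nat.card_eq_finsetCard]
  exact (Nat.card_eq_of_bijective _ (@toPart_bijective k n)).symm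

lemma tri_card (ℓ : ℕ) (hℓ : 1 ≤ ℓ) :
    (tri (4*ℓ) (6*ℓ)).card = (tri (4*ℓ) (6*ℓ-1)).card + 1 := by
  have herase : ((tri (4*ℓ) (6*ℓ)).erase (3*ℓ, 3*ℓ, 0)).card + 1 = (tri (4*ℓ) (6*ℓ)).card := by
    apply Finset.card_erase_add_one
    rw [mem_tri]
    dsimp only
    omega
  rw [← herase]
  congr 1
  refine Finset.card_bij'
    (fun p _ => if p.1 = p.2.1 then (4*ℓ, 2*ℓ - p.2.2/2, p.2.2/2 - 1) else (p.1 - 1, p.2.1, p.2.2))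
    (fun p _ => if p.2.1 + p.2.2 = 2*ℓ - 1 then (3*ℓ - p.2.2 - 1, 3*ℓ - p.2.2 - 1, 2*p.2.2 + 2)
      else (p.1 + 1, p.2.1, p.2.2)) ?_ ?_ ?_ ?_
  · rintro ⟨a, b, c⟩ ha
    simp only [Finset.mem_erase, mem_tri, ne_eq, Prod.mk.injEq] at ha
    dsimp only at ha ⊢
    split_ifs with h <;> (rw [mem_tri]; (try dsimp only); omega)
  · rintro ⟨a, b, c⟩ ha
    simp only [mem_tri] at ha
    dsimp only at ha ⊢
    split_ifs with h <;>
      (simp only [Finset.mem_erase, mem_tri, ne_eq, Prod.mk.injEq]; (try dsimp only); omega)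
  · rintro ⟨a, b, c⟩ ha
    simp only [Finset.mem_erase, mem_tri, ne_eq, Prod.mk.injEq] at ha
    dsimp only at ha ⊢
    split_ifs with h1 h2 h2 <;> (try dsimp only at h2) <;>
      simp only [Prod.mk.injEq, and_true, true_and] <;> omega
  · rintro ⟨a, b, c⟩ ha
    simp only [mem_tri] at ha
    dsimp only at ha ⊢
    split_ifs with h1 h2 h2 <;> (try dsimp only at h2) <;>
      simp only [Prod.mk.injEq, and_true, true_and] <;> omega

theorem stmt_1 (ℓ : ℕ) (hℓ : 1 ≤ ℓ) :
    boxPartitions (4 * ℓ) 3 (6 * ℓ) = boxPartitions (4 * ℓ) 3 (6 * ℓ - 1) + 1 := by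
  rw [boxPartitions_eq_card_tri, boxPartitions_eq_card_tri]
  exact tri_card ℓ hℓ
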